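/- arXiv:1505.08050 — 3 statements merged into one kernel-verified Lean document; each statement's English description precedes it below -/
import Mathlib

section
/- Let ε > 0, M > 0, and let F, G : [-√ε, √ε] → ℝ be functions such that (a) F(t) ≥ G(t) - ε for all t in [-√ε, √ε] and |F(0) - G(0)| ≤ ε; (b) F is concave on [-√ε, √ε] and differentiable at 0; (c) G is differentiable on [-√ε, √ε] and its derivative satisfies |G'(t) - G'(0)| ≤ M√ε for all t in [-√ε, √ε]. Then |F'(0) - G'(0)| ≤ (2 + M)√ε. -/
open Set Real

/-- Quantitative comparison of derivatives: if `F ≥ G - ε` on `[-√ε, √ε]`,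
`|F 0 - G 0| ≤ ε`, `F` is concave on the interval and differentiable at `0`,
and `G` is differentiable on the interval with `|G' t - G' 0| ≤ M √ε`, then
`|F'(0) - G'(0)| ≤ (2 + M) √ε`. -/
theorem stmt0 (ε M : ℝ) (hε : 0 < ε) (hM : 0 < M) (F G : ℝ → ℝ)
    (F'0 : ℝ) (G' : ℝ → ℝ)
    (hFG : ∀ t ∈ Icc (-Real.sqrt ε) (Real.sqrt ε), G t - ε ≤ F t)
    (h0 : |F 0 - G 0| ≤ ε)
    (hFconc : ConcaveOn ℝ (Icc (-Real.sqrt ε) (Real.sqrt ε)) F)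
    (hF : HasDerivAt F F'0 0)
    (hG : ∀ t ∈ Icc (-Real.sqrt ε) (Real.sqrt ε),
      HasDerivWithinAt G (G' t) (Icc (-Real.sqrt ε) (Real.sqrt ε)) t)
    (hG' : ∀ t ∈ Icc (-Real.sqrt ε) (Real.sqrt ε),
      |G' t - G' 0| ≤ M * Real.sqrt ε) :
    |F'0 - G' 0| ≤ (2 + M) * Real.sqrt ε := by
  set s := Real.sqrt ε with hs_def
  have hs : 0 < s := Real.sqrt_pos.mpr hε
  have hs2 : s * s = ε := Real.mul_self_sqrt hε.le
  have h0s : (0:ℝ) ∈ Icc (-s) s := ⟨by linarith, hs.le⟩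
  have hss : s ∈ Icc (-s) s := ⟨by linarith, le_refl s⟩
  have hns : (-s) ∈ Icc (-s) s := ⟨le_refl _, by linarith⟩
  -- Mean value bound for G
  have hGbd : ∀ t ∈ Icc (-s) s, |G t - G 0 - G' 0 * t| ≤ M * s * |t| := by
    intro t ht
    have key := (convex_Icc (-s) s).norm_image_sub_le_of_norm_hasDerivWithin_le
      (f := fun u => G u - G' 0 * u) (f' := fun u => G' u - G' 0) (C := M * s)
      (fun u hu => by
        simpa [Pi.sub_def] using (hG u hu).sub (((hasDerivWithinAt_id u _).const_mul (G' 0))))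
      (fun u hu => by simpa [Real.norm_eq_abs] using hG' u hu) h0s ht
    have heq : G t - G 0 - G' 0 * t = G t - G' 0 * t - G 0 := by ring
    rw [heq]
    simpa [Real.norm_eq_abs] using key
  -- Slope bounds for concave F
  have hconv : ConvexOn ℝ (Icc (-s) s) (-F) := hFconc.neg
  have h1 : (F s - F 0) / s ≤ F'0 := by
    have := hconv.le_slope_of_hasDerivAt h0s hss hs hF.neg
    rw [slope_neg_fun] at this
    have h' : slope F 0 s = (F s - F 0) / s := by
      rw [slope_def_field]; ring_nf
    simp only [Pi.neg_apply, neg_le_neg_iff] at this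
    linarith [this, h'.symm.le, h'.le]
  have h2 : F'0 ≤ (F 0 - F (-s)) / s := by
    have := hconv.slope_le_of_hasDerivAt hns h0s (by linarith) hF.neg
    rw [slope_neg_fun] at this
    have h' : slope F (-s) 0 = (F 0 - F (-s)) / s := by
      rw [slope_def_field]; ring_nf
    simp only [Pi.neg_apply, neg_le_neg_iff] at this
    linarith [this, h'.le]
  -- combine
  have hF0le : F 0 - G 0 ≤ ε := (abs_le.mp h0).2
  have hF0ge : -ε ≤ F 0 - G 0 := (abs_le.mp h0).1
  have hGs := abs_le.mp (hGbd s hss)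
  have hGns := abs_le.mp (hGbd (-s) hns)
  have hFs := hFG s hss
  have hFns := hFG (-s) hns
  rw [abs_of_pos hs] at hGs
  rw [abs_of_neg (by linarith : (-s:ℝ) < 0)] at hGns
  have e1 : F s - F 0 ≤ F'0 * s := by
    rw [div_le_iff₀ hs] at h1; linarith
  have e2 : F'0 * s ≤ F 0 - F (-s) := by
    rw [le_div_iff₀ hs] at h2; linarith
  rw [abs_le]
  constructor
  · nlinarith [hGs.1, e1, hFs, hF0le]
  · nlinarith [hGns.2, e2, hFns, hF0le]
end

section
/- Let ε > 0, M > 0, and let F, G : [-√ε, √ε] → ℝ satisfy: F is concave on [-√ε, √ε] and differentiable at 0; G is differentiable on [-√ε, √ε] with |G'(t) - G'(0)| ≤ M|t| for all t; F(t) ≥ G(t) - ε on the interval; and |F(0) - G(0)| ≤ ε. Then F'(0) ≥ G'(0) - (2 + M)√ε. -/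
open Set Real

/-- One-sided quantitative comparison: under the same setting,
with `|G' t - G' 0| ≤ M |t|`, one has `F'(0) ≥ G'(0) - (2 + M) √ε`. -/
theorem stmt1 (ε M : ℝ) (hε : 0 < ε) (hM : 0 < M) (F G : ℝ → ℝ)
    (F'0 : ℝ) (G' : ℝ → ℝ)
    (hFconc : ConcaveOn ℝ (Icc (-Real.sqrt ε) (Real.sqrt ε)) F)
    (hF : HasDerivAt F F'0 0)
    (hG : ∀ t ∈ Icc (-Real.sqrt ε) (Real.sqrt ε),
      HasDerivWithinAt G (G' t) (Icc (-Real.sqrt ε) (Real.sqrt ε)) t)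
    (hG' : ∀ t ∈ Icc (-Real.sqrt ε) (Real.sqrt ε), |G' t - G' 0| ≤ M * |t|)
    (hFG : ∀ t ∈ Icc (-Real.sqrt ε) (Real.sqrt ε), G t - ε ≤ F t)
    (h0 : |F 0 - G 0| ≤ ε) :
    G' 0 - (2 + M) * Real.sqrt ε ≤ F'0 := by
  set s := Real.sqrt ε with hs
  have hspos : 0 < s := Real.sqrt_pos.mpr hε
  have hs2 : s * s = ε := Real.mul_self_sqrt hε.le
  have h0mem : (0 : ℝ) ∈ Icc (-s) s := ⟨by linarith, hspos.le⟩
  have hsmem : s ∈ Icc (-s) s := ⟨by linarith, le_refl s⟩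
  -- slope bound from concavity: slope F 0 s ≤ F'0
  have hslope : slope F 0 s ≤ F'0 := by
    have := hFconc.neg.le_slope_of_hasDerivAt h0mem hsmem hspos hF.neg
    have hneg : slope (-F) 0 s = -slope F 0 s := by
      simp [slope_def_field, Pi.neg_apply]; ring
    rw [hneg] at this
    linarith
  -- bound G s from below using the derivative bound
  have key : ∀ x ∈ Icc (0:ℝ) s, ‖(fun t => G t - G' 0 * t) x - (fun t => G t - G' 0 * t) 0‖
      ≤ (M * s) * (x - 0) := by
    apply norm_image_sub_le_of_norm_deriv_le_segment'
      (f' := fun t => G' t - G' 0)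
    · intro x hx
      have hx' : x ∈ Icc (-s) s := ⟨by linarith [hx.1], hx.2⟩
      exact (((hG x hx').mono (Icc_subset_Icc (by linarith) le_rfl)).sub
        ((hasDerivAt_const x (G' 0)).mul (hasDerivAt_id x)).hasDerivWithinAt).congr_deriv
        (by ring)
    · intro x hx
      have hx' : x ∈ Icc (-s) s := ⟨by linarith [hx.1], hx.2.le⟩
      calc ‖G' x - G' 0‖ ≤ M * |x| := hG' x hx'
        _ ≤ M * s := by
            have : |x| ≤ s := abs_le.mpr ⟨by linarith [hx.1], hx.2.le⟩
            nlinarith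
  have hGs : G 0 + G' 0 * s - M * ε ≤ G s := by
    have := key s ⟨hspos.le, le_rfl⟩
    rw [Real.norm_eq_abs] at this
    have h := abs_le.mp this
    simp only [mul_zero, sub_zero] at h
    nlinarith [h.1]
  -- combine
  have hF0 : F 0 ≤ G 0 + ε := by have := abs_le.mp h0; linarith [this.2]
  have hFs : G s - ε ≤ F s := hFG s hsmem
  have hslope_val : slope F 0 s = (F s - F 0) / s := by
    simp [slope_def_field]
  rw [hslope_val] at hslope
  have h1 : G' 0 * s - M * ε - 2 * ε ≤ F s - F 0 := by linarith
  have h2 : G' 0 - (2 + M) * s ≤ (F s - F 0) / s := by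
    rw [le_div_iff₀ hspos]; nlinarith
  linarith
end

section
/- Let u be a subharmonic function on the open unit disc D(0,1) ⊂ ℂ such that u(z) ≤ C|z - 1|^α for all z on the unit circle (in the sense of boundary values from the Poisson integral bound u(t') ≤ C' ∫_{-π}^{π} (1-|t'|²)/|e^{iθ}-t'|² · |θ|^α dθ for t' ∈ [1/2, 1)), where 0 < α < 1 and C, C' > 0. Then there is a constant c > 0 depending only on α and C' such that u(t') ≤ c(1 - t')^α for all t' ∈ [1/2, 1). -/
open Real intervalIntegral

lemma abs_sq_eq' (t' θ : ℝ) :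
    ‖Complex.exp (θ * Complex.I) - (t' : ℂ)‖ ^ 2
      = 1 - 2 * t' * Real.cos θ + t' ^ 2 := by
  rw [Complex.sq_norm, Complex.normSq_apply]
  simp only [Complex.sub_re, Complex.sub_im, Complex.exp_ofReal_mul_I_re,
    Complex.exp_ofReal_mul_I_im, Complex.ofReal_re, Complex.ofReal_im, sub_zero]
  nlinarith [Real.sin_sq_add_cos_sq θ]

set_option maxHeartbeats 1000000 in
lemma key_bound (α : ℝ) (hα : 0 < α) (hα1 : α < 1) (t' : ℝ)
    (ht : t' ∈ Set.Ico (1/2 : ℝ) 1) :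
    (∫ θ in (-π)..π, (1 - t' ^ 2) / (1 - 2 * t' * Real.cos θ + t' ^ 2) * |θ| ^ α)
      ≤ (4 / (α + 1) + 4 * π ^ 2 / (1 - α)) * (1 - t') ^ α := by
  obtain ⟨ht1, ht2⟩ := ht
  set s : ℝ := 1 - t' with hs_def
  have hs : 0 < s := by simp [hs_def]; linarith
  have hs2 : s ≤ 1 / 2 := by simp [hs_def]; linarith
  have hsπ : s ≤ π := le_trans (by linarith [Real.pi_gt_three]) le_rfl
  set G : ℝ → ℝ := fun θ => (1 - t' ^ 2) / (1 - 2 * t' * Real.cos θ + t' ^ 2) * |θ| ^ α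
    with hG_def
  have hD1 : ∀ θ : ℝ, s ^ 2 ≤ 1 - 2 * t' * Real.cos θ + t' ^ 2 := by
    intro θ
    have := Real.cos_le_one θ
    nlinarith
  have hDpos : ∀ θ : ℝ, 0 < 1 - 2 * t' * Real.cos θ + t' ^ 2 := fun θ =>
    lt_of_lt_of_le (by positivity) (hD1 θ)
  have hD2 : ∀ θ : ℝ, |θ| ≤ π → θ ^ 2 / π ^ 2 ≤ 1 - 2 * t' * Real.cos θ + t' ^ 2 := by
    intro θ hθ
    have h1 := Real.cos_le_one_sub_mul_cos_sq hθ
    have hπ := Real.pi_pos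
    have hπ2 : (0:ℝ) < π ^ 2 := by positivity
    have h2 : 2 * θ ^ 2 ≤ π ^ 2 * (1 - Real.cos θ) := by
      have := mul_le_mul_of_nonneg_left h1 hπ2.le
      rw [mul_sub] at this
      calc 2 * θ ^ 2 = π ^ 2 * (2 / π ^ 2 * θ ^ 2) := by field_simp
        _ ≤ π ^ 2 * (1 - Real.cos θ) := by nlinarith
    have hc : (0:ℝ) ≤ 1 - Real.cos θ := by linarith [Real.cos_le_one θ]
    rw [div_le_iff₀ hπ2]
    nlinarith [sq_nonneg (1 - t'), sq_nonneg θ]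
  have hnum0 : (0:ℝ) ≤ 1 - t' ^ 2 := by nlinarith
  have hnum : 1 - t' ^ 2 ≤ 2 * s := by nlinarith
  have hGcont : Continuous G := by
    apply Continuous.mul
    · exact continuous_const.div (by continuity) fun θ => (hDpos θ).ne'
    · exact continuous_abs.rpow_const fun x => Or.inr hα.le
  have hGint : ∀ a b : ℝ, IntervalIntegrable G MeasureTheory.volume a b := fun a b =>
    hGcont.intervalIntegrable a b
  have heven : ∀ θ : ℝ, G (-θ) = G θ := by
    intro θ; simp [hG_def, Real.cos_neg, abs_neg]
  -- symmetry
  have hsym : (∫ θ in (-π)..(0:ℝ), G θ) = ∫ θ in (0:ℝ)..π, G θ := by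
    have h := intervalIntegral.integral_comp_neg (a := (0:ℝ)) (b := π) (f := G)
    simp only [neg_zero] at h
    rw [← h]
    simp_rw [heven]
  have hsplit1 : (∫ θ in (-π)..π, G θ) = 2 * ∫ θ in (0:ℝ)..π, G θ := by
    rw [← intervalIntegral.integral_add_adjacent_intervals (hGint (-π) 0) (hGint 0 π), hsym]
    ring
  have hsplit2 : (∫ θ in (0:ℝ)..π, G θ) = (∫ θ in (0:ℝ)..s, G θ) + ∫ θ in s..π, G θ :=
    (intervalIntegral.integral_add_adjacent_intervals (hGint 0 s) (hGint s π)).symm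
  -- bound on [0, s]
  have hb1 : (∫ θ in (0:ℝ)..s, G θ) ≤ 2 / (α + 1) * s ^ α := by
    have hmono : (∫ θ in (0:ℝ)..s, G θ) ≤ ∫ θ in (0:ℝ)..s, 2 / s * θ ^ α := by
      apply intervalIntegral.integral_mono_on hs.le (hGint 0 s)
      · exact (intervalIntegrable_rpow (Or.inl hα.le)).const_mul _
      · intro θ hθ
        obtain ⟨hθ0, hθs⟩ := hθ
        have habs : |θ| = θ := abs_of_nonneg hθ0
        have hrp : (0:ℝ) ≤ θ ^ α := Real.rpow_nonneg hθ0 α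
        have : (1 - t' ^ 2) / (1 - 2 * t' * Real.cos θ + t' ^ 2) ≤ 2 / s := by
          rw [div_le_div_iff₀ (hDpos θ) hs]
          nlinarith [hD1 θ, hDpos θ]
        calc G θ = (1 - t' ^ 2) / (1 - 2 * t' * Real.cos θ + t' ^ 2) * θ ^ α := by
              rw [hG_def]; simp [habs]
          _ ≤ 2 / s * θ ^ α := mul_le_mul_of_nonneg_right this hrp
    have hval : (∫ θ in (0:ℝ)..s, 2 / s * θ ^ α) = 2 / s * (s ^ (α + 1) / (α + 1)) := by
      rw [intervalIntegral.integral_const_mul, integral_rpow (Or.inl (by linarith))]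
      rw [Real.zero_rpow (by linarith)]
      ring
    rw [hval] at hmono
    have : 2 / s * (s ^ (α + 1) / (α + 1)) = 2 / (α + 1) * s ^ α := by
      rw [Real.rpow_add hs, Real.rpow_one]
      field_simp
    linarith [hmono, this.symm.le]
  -- bound on [s, π]
  have hb2 : (∫ θ in s..π, G θ) ≤ 2 * π ^ 2 / (1 - α) * s ^ α := by
    have hmono : (∫ θ in s..π, G θ) ≤ ∫ θ in s..π, 2 * s * π ^ 2 * θ ^ (α - 2) := by
      apply intervalIntegral.integral_mono_on hsπ (hGint s π)
      · apply IntervalIntegrable.const_mul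
        apply intervalIntegrable_rpow
        right
        rw [Set.uIcc_of_le hsπ]
        intro h
        exact absurd (Set.mem_Icc.mp h).1 (by linarith)
      · intro θ hθ
        obtain ⟨hθs, hθπ⟩ := hθ
        have hθ0 : 0 < θ := lt_of_lt_of_le hs hθs
        have habs : |θ| = θ := abs_of_nonneg hθ0.le
        have habs2 : |θ| ≤ π := by rw [habs]; exact hθπ
        have hrp : (0:ℝ) ≤ θ ^ α := Real.rpow_nonneg hθ0.le α
        have hπ := Real.pi_pos
        have hfrac : (1 - t' ^ 2) / (1 - 2 * t' * Real.cos θ + t' ^ 2)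
            ≤ 2 * s * π ^ 2 / θ ^ 2 := by
          have hh : θ ^ 2 ≤ (1 - 2 * t' * Real.cos θ + t' ^ 2) * π ^ 2 :=
            (div_le_iff₀ (by positivity : (0:ℝ) < π ^ 2)).mp (hD2 θ habs2)
          rw [div_le_div_iff₀ (hDpos θ) (by positivity)]
          nlinarith [mul_le_mul_of_nonneg_left hh
              (by linarith : (0:ℝ) ≤ 2 * s),
            mul_le_mul_of_nonneg_right hnum (sq_nonneg θ)]
        have hpow : θ ^ (α - 2) * θ ^ (2:ℕ) = θ ^ α := by
          rw [← Real.rpow_natCast θ 2, ← Real.rpow_add hθ0]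
          norm_num
        calc G θ = (1 - t' ^ 2) / (1 - 2 * t' * Real.cos θ + t' ^ 2) * θ ^ α := by
              rw [hG_def]; simp [habs]
          _ ≤ 2 * s * π ^ 2 / θ ^ 2 * θ ^ α := mul_le_mul_of_nonneg_right hfrac hrp
          _ = 2 * s * π ^ 2 * θ ^ (α - 2) := by
              rw [← hpow]; field_simp [hθ0.ne']
    have hval : (∫ θ in s..π, 2 * s * π ^ 2 * θ ^ (α - 2))
        = 2 * s * π ^ 2 * ((π ^ (α - 1) - s ^ (α - 1)) / (α - 1)) := by
      rw [intervalIntegral.integral_const_mul, integral_rpow, show α - 2 + 1 = α - 1 by ring]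
      · right
        constructor
        · intro h; linarith [h]
        · rw [Set.uIcc_of_le hsπ]
          intro h
          exact absurd (Set.mem_Icc.mp h).1 (by linarith)
    rw [hval] at hmono
    have hineq : 2 * s * π ^ 2 * ((π ^ (α - 1) - s ^ (α - 1)) / (α - 1))
        ≤ 2 * π ^ 2 / (1 - α) * s ^ α := by
      have hπ := Real.pi_pos
      have h1 : (π:ℝ) ^ (α - 1) ≥ 0 := Real.rpow_nonneg hπ.le _
      have h2 : (π ^ (α - 1) - s ^ (α - 1)) / (α - 1)
          = (s ^ (α - 1) - π ^ (α - 1)) / (1 - α) := by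
        rw [div_eq_div_iff (by linarith) (by linarith)]; ring
      rw [h2]
      have h3 : s * s ^ (α - 1) = s ^ α := by
        nth_rewrite 1 [← Real.rpow_one s]
        rw [← Real.rpow_add hs]; norm_num
      have h4 : 2 * s * π ^ 2 * ((s ^ (α - 1) - π ^ (α - 1)) / (1 - α))
          ≤ 2 * s * π ^ 2 * (s ^ (α - 1) / (1 - α)) := by
        apply mul_le_mul_of_nonneg_left _
          (mul_nonneg (by linarith : (0:ℝ) ≤ 2 * s) (sq_nonneg π))
        exact (div_le_div_iff_of_pos_right (by linarith : (0:ℝ) < 1 - α)).mpr (by linarith)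
      calc 2 * s * π ^ 2 * ((s ^ (α - 1) - π ^ (α - 1)) / (1 - α))
          ≤ 2 * s * π ^ 2 * (s ^ (α - 1) / (1 - α)) := h4
        _ = 2 * π ^ 2 / (1 - α) * s ^ α := by rw [← h3]; ring
    linarith
  rw [hsplit1, hsplit2]
  have hKs : (4 / (α + 1) + 4 * π ^ 2 / (1 - α)) * s ^ α
      = 2 * (2 / (α + 1) * s ^ α + 2 * π ^ 2 / (1 - α) * s ^ α) := by ring
  rw [hKs]
  linarith

/-- Poisson-kernel estimate: if `u` on the unit disc satisfies the Poisson
integral bound `u(t') ≤ C' ∫_{-π}^{π} (1-t'²)/|e^{iθ}-t'|² |θ|^α dθ` for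
`t' ∈ [1/2, 1)`, with `0 < α < 1`, then there is `c > 0` (depending only on
`α` and `C'`) with `u(t') ≤ c (1-t')^α` for all `t' ∈ [1/2, 1)`. -/
theorem stmt6 (α C' : ℝ) (hα : 0 < α) (hα1 : α < 1) (hC' : 0 < C')
    (u : ℂ → ℝ)
    (hu : ∀ t' ∈ Set.Ico (1/2 : ℝ) 1,
      u (t' : ℂ) ≤ C' * ∫ θ in (-π)..π,
        (1 - t' ^ 2) / ‖Complex.exp (θ * Complex.I) - (t' : ℂ)‖ ^ 2
          * |θ| ^ α) :
    ∃ c > 0, ∀ t' ∈ Set.Ico (1/2 : ℝ) 1, u (t' : ℂ) ≤ c * (1 - t') ^ α := by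
  have hA : (0:ℝ) < α + 1 := by linarith
  have hB : (0:ℝ) < 1 - α := by linarith
  refine ⟨C' * (4 / (α + 1) + 4 * π ^ 2 / (1 - α)), ?_, ?_⟩
  · apply mul_pos hC'
    exact add_pos (div_pos (by norm_num) hA) (div_pos (by positivity) hB)
  · intro t' ht
    have h := hu t' ht
    simp_rw [abs_sq_eq'] at h
    calc u (t' : ℂ) ≤ _ := h
      _ ≤ C' * ((4 / (α + 1) + 4 * π ^ 2 / (1 - α)) * (1 - t') ^ α) :=
          mul_le_mul_of_nonneg_left (key_bound α hα hα1 t' ht) hC'.le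
      _ = C' * (4 / (α + 1) + 4 * π ^ 2 / (1 - α)) * (1 - t') ^ α := by ring
end
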